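/- If 3 ≤ m ≤ n, then for every v ∈ S one has n − 2n/m + 2n/m² ≤ ζ_v ≤ n + n/m − 2n/m², and consequently 0.55·n < ζ_v < 1.13·n. -/

import Mathlib

open Finset
open scoped InnerProductSpace

section Aux
variable {V E : Type*} [Fintype V] [DecidableEq V] [Fintype E] [DecidableEq E]
    (G : SimpleGraph V) [DecidableRel G.Adj] (tail head : E → V)

omit [DecidableEq E] in
lemma zeta_card_incident
    (hadj : ∀ e : E, tail e ≠ head e → G.Adj (tail e) (head e))
    (hinj : ∀ e₁ e₂ : E, tail e₁ ≠ head e₁ → tail e₂ ≠ head e₂ →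
      (s(tail e₁, head e₁) : Sym2 V) = s(tail e₂, head e₂) → e₁ = e₂)
    (hsurj : ∀ u v : V, G.Adj u v → ∃ e : E, (s(tail e, head e) : Sym2 V) = s(u, v))
    (hloops : ∀ v : V, (Finset.univ.filter fun e : E => tail e = v ∧ head e = v).card
        = Fintype.card V - G.degree v)
    (u : V) :
    (Finset.univ.filter fun e : E => head e = u ∨ tail e = u).card = Fintype.card V := by
  classical
  have hsplit : (Finset.univ.filter fun e : E => head e = u ∨ tail e = u)
      = (Finset.univ.filter fun e : E => tail e = u ∧ head e = u)
        ∪ (Finset.univ.filter fun e : E => (head e = u ∨ tail e = u) ∧ tail e ≠ head e) := by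
    ext e
    simp only [mem_union, mem_filter, mem_univ, true_and]
    constructor
    · intro h
      by_cases hl : tail e = head e
      · rcases h with h | h
        · exact Or.inl ⟨hl.trans h, h⟩
        · exact Or.inl ⟨h, hl.symm.trans h⟩
      · exact Or.inr ⟨h, hl⟩
    · rintro (⟨h1, h2⟩ | ⟨h, _⟩)
      · exact Or.inl h2
      · exact h
  have hdisj : Disjoint (Finset.univ.filter fun e : E => tail e = u ∧ head e = u)
      (Finset.univ.filter fun e : E => (head e = u ∨ tail e = u) ∧ tail e ≠ head e) := by
    rw [Finset.disjoint_left]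
    intro e he1 he2
    simp only [mem_filter, mem_univ, true_and] at he1 he2
    exact he2.2 (he1.1.trans he1.2.symm)
  have hN : (Finset.univ.filter fun e : E => (head e = u ∨ tail e = u) ∧ tail e ≠ head e).card
      = G.degree u := by
    rw [← SimpleGraph.card_neighborFinset_eq_degree]
    apply Finset.card_bij (fun e _ => if head e = u then tail e else head e)
    · intro e he
      simp only [mem_filter, mem_univ, true_and] at he
      obtain ⟨h, hne⟩ := he
      have hAdj := hadj e hne
      rw [SimpleGraph.mem_neighborFinset]
      split_ifs with hh
      · rw [hh] at hAdj; exact hAdj.symm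
      · rcases h with h | h
        · exact absurd h hh
        · rw [h] at hAdj; exact hAdj
    · intro e₁ h₁ e₂ h₂ heq
      simp only [mem_filter, mem_univ, true_and] at h₁ h₂
      have key : ∀ e, ((head e = u ∨ tail e = u) ∧ tail e ≠ head e) →
          (s(tail e, head e) : Sym2 V) = s(u, (if head e = u then tail e else head e)) := by
        intro e ⟨h, hne⟩
        split_ifs with hh
        · rw [hh, Sym2.eq_swap]
        · rcases h with h | h
          · exact absurd h hh
          · rw [h]
      apply hinj e₁ e₂ h₁.2 h₂.2
      rw [key e₁ h₁, key e₂ h₂, heq]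
    · intro w hw
      rw [SimpleGraph.mem_neighborFinset] at hw
      obtain ⟨e, he⟩ := hsurj u w hw
      rw [Sym2.eq_iff] at he
      have hne : tail e ≠ head e := by
        rcases he with ⟨h1, h2⟩ | ⟨h1, h2⟩ <;> rw [h1, h2]
        · exact hw.ne
        · exact hw.ne'
      refine ⟨e, ?_, ?_⟩
      · simp only [mem_filter, mem_univ, true_and]
        rcases he with ⟨h1, h2⟩ | ⟨h1, h2⟩
        · exact ⟨Or.inr h1, hne⟩
        · exact ⟨Or.inl h2, hne⟩
      · rcases he with ⟨h1, h2⟩ | ⟨h1, h2⟩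
        · rw [if_neg, h2]
          rw [h2]; exact hw.ne'
        · rw [if_pos h2, h1]
  rw [hsplit, Finset.card_union_of_disjoint hdisj, hloops u, hN]
  have := G.degree_lt_card_verts u
  omega

omit [Fintype V] [DecidableEq E] in
lemma zeta_card_cross
    (hadj : ∀ e : E, tail e ≠ head e → G.Adj (tail e) (head e))
    (hinj : ∀ e₁ e₂ : E, tail e₁ ≠ head e₁ → tail e₂ ≠ head e₂ →
      (s(tail e₁, head e₁) : Sym2 V) = s(tail e₂, head e₂) → e₁ = e₂)
    (hsurj : ∀ u v : V, G.Adj u v → ∃ e : E, (s(tail e, head e) : Sym2 V) = s(u, v))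
    {u w : V} (huw : u ≠ w) :
    (Finset.univ.filter fun e : E =>
        (head e = u ∧ tail e = w) ∨ (head e = w ∧ tail e = u)).card
      = if G.Adj u w then 1 else 0 := by
  classical
  have hcond : ∀ e : E, ((head e = u ∧ tail e = w) ∨ (head e = w ∧ tail e = u)) →
      tail e ≠ head e ∧ (s(tail e, head e) : Sym2 V) = s(u, w) := by
    rintro e (⟨h1, h2⟩ | ⟨h1, h2⟩)
    · rw [h1, h2]
      exact ⟨huw.symm, Sym2.eq_swap⟩
    · rw [h1, h2]
      exact ⟨huw, rfl⟩
  split_ifs with hA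
  · obtain ⟨e₀, he₀⟩ := hsurj u w hA
    rw [Finset.card_eq_one]
    refine ⟨e₀, ?_⟩
    ext e
    simp only [mem_filter, mem_univ, true_and, mem_singleton]
    constructor
    · intro h
      obtain ⟨hne, hs⟩ := hcond e h
      have hne₀ : tail e₀ ≠ head e₀ := by
        rw [Sym2.eq_iff] at he₀
        rcases he₀ with ⟨h1, h2⟩ | ⟨h1, h2⟩ <;> rw [h1, h2]
        · exact hA.ne
        · exact hA.ne'
      exact hinj e e₀ hne hne₀ (hs.trans he₀.symm)
    · intro h
      subst h
      rw [Sym2.eq_iff] at he₀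
      rcases he₀ with ⟨h1, h2⟩ | ⟨h1, h2⟩
      · exact Or.inr ⟨h2, h1⟩
      · exact Or.inl ⟨h2, h1⟩
  · rw [Finset.card_eq_zero, Finset.filter_eq_empty_iff]
    intro e _ h
    obtain ⟨hne, hs⟩ := hcond e h
    have := hadj e hne
    rw [Sym2.eq_iff] at hs
    rcases hs with ⟨h1, h2⟩ | ⟨h1, h2⟩
    · rw [h1, h2] at this; exact hA this
    · rw [h1, h2] at this; exact hA this.symm

end Aux

lemma zeta_arith (N Mr D Qr zv : ℝ) (hmr : 3 ≤ Mr) (hnr : Mr ≤ N)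
    (hd0 : 0 ≤ D) (hQ0 : 0 ≤ Qr) (hdr : D ≤ Mr - 1) (hQr : Qr ≤ (Mr-1)*(Mr-2))
    (heq : zv * Mr^2 = N*Mr^2 - 2*(N-D)*Mr + (Mr*N - (2*D+Qr))) :
    (N*Mr^2 - 2*N*Mr + 2*N ≤ zv*Mr^2 ∧ zv*Mr^2 ≤ N*Mr^2 + N*Mr - 2*N)
      ∧ (0.55*N*Mr^2 < zv*Mr^2 ∧ zv*Mr^2 < 1.13*N*Mr^2) := by
  have hn0 : (0:ℝ) ≤ N := by linarith
  have h1 : N*Mr^2 - 2*N*Mr + 2*N ≤ zv*Mr^2 := by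
    nlinarith [mul_nonneg hd0 (by linarith : (0:ℝ) ≤ Mr - 1),
      mul_nonneg (by linarith : (0:ℝ) ≤ Mr - 2) (by linarith : (0:ℝ) ≤ N - Mr + 1)]
  have h2 : zv*Mr^2 ≤ N*Mr^2 + N*Mr - 2*N := by
    nlinarith [mul_nonneg (by linarith : (0:ℝ) ≤ Mr - 1) (by linarith : (0:ℝ) ≤ N - D)]
  refine ⟨⟨h1, h2⟩, ?_, ?_⟩
  · nlinarith [mul_nonneg hn0 (sq_nonneg (Mr - 3)),
      mul_nonneg hn0 (by linarith : (0:ℝ) ≤ Mr - 3)]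
  · nlinarith [mul_nonneg hn0 (sq_nonneg (Mr - 4)),
      mul_nonneg hn0 (by linarith : (0:ℝ) ≤ Mr - 3)]

lemma zeta_expand (N Mr D Qr zv : ℝ) (hMr : Mr ≠ 0)
    (h : zv = N - 2*Mr⁻¹*(N-D) + (Mr⁻¹)^2*(Mr*N - (2*D+Qr))) :
    zv*Mr^2 = N*Mr^2 - 2*(N-D)*Mr + (Mr*N - (2*D+Qr)) := by
  subst h
  field_simp

lemma zeta_div_bounds (N Mr zv : ℝ) (hMr : 0 < Mr)
    (h : (N*Mr^2 - 2*N*Mr + 2*N ≤ zv*Mr^2 ∧ zv*Mr^2 ≤ N*Mr^2 + N*Mr - 2*N)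
      ∧ (0.55*N*Mr^2 < zv*Mr^2 ∧ zv*Mr^2 < 1.13*N*Mr^2)) :
    (N - 2*N/Mr + 2*N/Mr^2 ≤ zv ∧ zv ≤ N + N/Mr - 2*N/Mr^2)
      ∧ (0.55*N < zv ∧ zv < 1.13*N) := by
  have hM2 : (0:ℝ) < Mr^2 := by positivity
  have hMr' : Mr ≠ 0 := ne_of_gt hMr
  obtain ⟨⟨h1, h2⟩, h3, h4⟩ := h
  refine ⟨⟨?_, ?_⟩, ?_, ?_⟩
  · refine le_of_mul_le_mul_right ?_ hM2
    calc (N - 2*N/Mr + 2*N/Mr^2) * Mr^2 = N*Mr^2 - 2*N*Mr + 2*N := by field_simp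
      _ ≤ zv * Mr^2 := h1
  · refine le_of_mul_le_mul_right ?_ hM2
    calc zv * Mr^2 ≤ N*Mr^2 + N*Mr - 2*N := h2
      _ = (N + N/Mr - 2*N/Mr^2) * Mr^2 := by field_simp
  · exact lt_of_mul_lt_mul_right h3 (le_of_lt hM2)
  · exact lt_of_mul_lt_mul_right h4 (le_of_lt hM2)



/-- If `3 ≤ m ≤ n`, then for every `v ∈ S` one has
`n − 2n/m + 2n/m² ≤ ζ_v ≤ n + n/m − 2n/m²`, and consequently `0.55·n < ζ_v < 1.13·n`. -/
theorem zeta_bounds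
    {V E : Type*} [Fintype V] [DecidableEq V] [Fintype E] [DecidableEq E]
    (G : SimpleGraph V) [DecidableRel G.Adj]
    (tail head : E → V)
    (hadj : ∀ e : E, tail e ≠ head e → G.Adj (tail e) (head e))
    (hinj : ∀ e₁ e₂ : E, tail e₁ ≠ head e₁ → tail e₂ ≠ head e₂ →
      (s(tail e₁, head e₁) : Sym2 V) = s(tail e₂, head e₂) → e₁ = e₂)
    (hsurj : ∀ u v : V, G.Adj u v → ∃ e : E, (s(tail e, head e) : Sym2 V) = s(u, v))
    (hloops : ∀ v : V, (Finset.univ.filter fun e : E => tail e = v ∧ head e = v).card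
        = Fintype.card V - G.degree v)
    (M : ℝ) (hM : 0 < M)
    (x : V → EuclideanSpace ℝ (E ⊕ V))
    (hxE : ∀ (v : V) (e : E),
      x v (Sum.inl e) = if head e = v then -1 else if tail e = v then 1 else 0)
    (hxV : ∀ v u : V, x v (Sum.inr u) = if u = v then M else 0)
    (S : Finset V) (m : ℕ) (hS : S.card = m)
    (c : EuclideanSpace ℝ (E ⊕ V)) (hc : c = (m : ℝ)⁻¹ • ∑ v ∈ S, x v)
    (hm : 3 ≤ m) (hmn : m ≤ Fintype.card V)
    (z : V → EuclideanSpace ℝ (E ⊕ V)) (hz : ∀ v : V, z v = x v - c)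
    (ζ : V → ℝ) (hζ : ∀ v : V, ζ v = ∑ e : E, (z v (Sum.inl e)) ^ 2)
 :
    ∀ v ∈ S,
      ((Fintype.card V : ℝ) - 2 * (Fintype.card V : ℝ) / m
          + 2 * (Fintype.card V : ℝ) / (m : ℝ) ^ 2 ≤ ζ v ∧
        ζ v ≤ (Fintype.card V : ℝ) + (Fintype.card V : ℝ) / m
          - 2 * (Fintype.card V : ℝ) / (m : ℝ) ^ 2) ∧
      (0.55 * (Fintype.card V : ℝ) < ζ v ∧ ζ v < 1.13 * (Fintype.card V : ℝ)) := by
  intro v hv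
  classical
  set n : ℕ := Fintype.card V with hn
  set a : V → E → ℝ := fun u e => x u (Sum.inl e) with ha
  -- sum of squares
  have hsq : ∀ u : V, ∑ e : E, a u e ^ 2 = (n : ℝ) := by
    intro u
    have hpt : ∀ e : E, a u e ^ 2 = if head e = u ∨ tail e = u then (1:ℝ) else 0 := by
      intro e
      simp only [ha, hxE]
      split_ifs <;> first | tauto | norm_num
    rw [Finset.sum_congr rfl fun e _ => hpt e, Finset.sum_ite, Finset.sum_const,
      Finset.sum_const, zeta_card_incident G tail head hadj hinj hsurj hloops u]
    simp [hn]
  -- cross sums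
  have hcross : ∀ u w : V, u ≠ w →
      ∑ e : E, a u e * a w e = if G.Adj u w then (-1:ℝ) else 0 := by
    intro u w huw
    have hpt : ∀ e : E, a u e * a w e =
        if (head e = u ∧ tail e = w) ∨ (head e = w ∧ tail e = u) then (-1:ℝ) else 0 := by
      intro e
      simp only [ha, hxE]
      split_ifs <;> subst_vars <;> first | tauto | norm_num
    rw [Finset.sum_congr rfl fun e _ => hpt e, Finset.sum_ite, Finset.sum_const,
      Finset.sum_const, zeta_card_cross G tail head hadj hinj hsurj huw]
    split_ifs <;> simp
  -- parameters
  set d : ℕ := (S.filter (G.Adj v)).card with hd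
  set Q : ℕ := ∑ u ∈ S.erase v, ((S.erase v).filter (G.Adj u)).card with hQ
  have herase : ∀ u : V, (S.erase u).filter (G.Adj u) = S.filter (G.Adj u) := by
    intro u
    ext w
    simp only [mem_filter, mem_erase]
    constructor
    · rintro ⟨⟨_, hw⟩, hA⟩; exact ⟨hw, hA⟩
    · rintro ⟨hw, hA⟩; exact ⟨⟨hA.ne', hw⟩, hA⟩
  -- key sum 1
  have key1 : ∑ e : E, a v e * ∑ u ∈ S, a u e = (n : ℝ) - d := by
    have h1 : ∑ e : E, a v e * ∑ u ∈ S, a u e = ∑ u ∈ S, ∑ e : E, a v e * a u e := by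
      rw [Finset.sum_comm]
      exact Finset.sum_congr rfl fun e _ => Finset.mul_sum _ _ _
    rw [h1, ← Finset.add_sum_erase _ _ hv]
    have h2 : ∑ e : E, a v e * a v e = (n : ℝ) := by
      rw [← hsq v]; exact Finset.sum_congr rfl fun e _ => (sq (a v e)).symm
    have h3 : ∑ u ∈ S.erase v, ∑ e : E, a v e * a u e
        = -((S.filter (G.Adj v)).card : ℝ) := by
      rw [Finset.sum_congr rfl fun u hu => hcross v u (Finset.ne_of_mem_erase hu).symm]
      rw [Finset.sum_ite, Finset.sum_const, Finset.sum_const, herase v]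
      simp
    rw [h2, h3, hd]
    ring
  -- key sum 2
  have key2 : ∑ e : E, (∑ u ∈ S, a u e) ^ 2 = (m : ℝ) * n - (2 * d + Q) := by
    have h1 : ∑ e : E, (∑ u ∈ S, a u e) ^ 2
        = ∑ u ∈ S, ∑ w ∈ S, ∑ e : E, a u e * a w e := by
      have hpt : ∀ e : E, (∑ u ∈ S, a u e) ^ 2 = ∑ u ∈ S, ∑ w ∈ S, a u e * a w e := by
        intro e
        rw [sq, Finset.sum_mul_sum]
      rw [Finset.sum_congr rfl fun e _ => hpt e, Finset.sum_comm]
      exact Finset.sum_congr rfl fun u _ => Finset.sum_comm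
    have h2 : ∀ u ∈ S, ∑ w ∈ S, ∑ e : E, a u e * a w e
        = (n : ℝ) - ((S.filter (G.Adj u)).card : ℝ) := by
      intro u hu
      rw [← Finset.add_sum_erase _ _ hu]
      have h2a : ∑ e : E, a u e * a u e = (n : ℝ) := by
        rw [← hsq u]; exact Finset.sum_congr rfl fun e _ => (sq (a u e)).symm
      have h2b : ∑ w ∈ S.erase u, ∑ e : E, a u e * a w e
          = -((S.filter (G.Adj u)).card : ℝ) := by
        rw [Finset.sum_congr rfl fun w hw => hcross u w (Finset.ne_of_mem_erase hw).symm]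
        rw [Finset.sum_ite, Finset.sum_const, Finset.sum_const, herase u]
        simp
      rw [h2a, h2b]
      ring
    have hP : ∑ u ∈ S, ((S.filter (G.Adj u)).card : ℝ) = 2 * d + Q := by
      rw [← Finset.add_sum_erase _ _ hv]
      have hterm : ∀ u ∈ S.erase v, ((S.filter (G.Adj u)).card : ℝ)
          = ((S.erase v).filter (G.Adj u)).card + if G.Adj u v then (1:ℝ) else 0 := by
        intro u hu
        conv_lhs => rw [← Finset.insert_erase hv, Finset.filter_insert]
        split_ifs with h
        · rw [Finset.card_insert_of_notMem (by simp)]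
          push_cast; ring
        · simp
      rw [Finset.sum_congr rfl hterm, Finset.sum_add_distrib]
      have hsecond : ∑ u ∈ S.erase v, (if G.Adj u v then (1:ℝ) else 0)
          = (d : ℝ) := by
        rw [Finset.sum_ite, Finset.sum_const, Finset.sum_const]
        have : (S.erase v).filter (fun u => G.Adj u v) = S.filter (G.Adj v) := by
          ext w
          simp only [mem_filter, mem_erase]
          constructor
          · rintro ⟨⟨_, hw⟩, hA⟩; exact ⟨hw, hA.symm⟩
          · rintro ⟨hw, hA⟩; exact ⟨⟨hA.ne', hw⟩, hA.symm⟩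
        rw [this]
        simp [hd]
      rw [hsecond, hQ]
      push_cast
      ring
    rw [h1, Finset.sum_congr rfl h2, Finset.sum_sub_distrib, Finset.sum_const, hS, hP]
    push_cast
    ring
  -- expression for ζ v
  have hza : ∀ e : E, z v (Sum.inl e) = a v e - (m:ℝ)⁻¹ * ∑ u ∈ S, a u e := by
    intro e
    rw [hz, hc]
    simp only [PiLp.sub_apply, PiLp.smul_apply, smul_eq_mul, ha]
    congr 2
    rw [WithLp.ofLp_sum]
    exact Finset.sum_apply _ _ _
  have hζ2 : ζ v = (∑ e : E, a v e ^ 2) - 2 * (m:ℝ)⁻¹ * (∑ e : E, a v e * ∑ u ∈ S, a u e)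
      + ((m:ℝ)⁻¹)^2 * (∑ e : E, (∑ u ∈ S, a u e) ^ 2) := by
    rw [hζ, Finset.mul_sum, Finset.mul_sum,
      ← Finset.sum_sub_distrib, ← Finset.sum_add_distrib]
    refine Finset.sum_congr rfl fun e _ => ?_
    rw [hza]
    ring
  rw [hsq v, key1, key2] at hζ2
  -- bounds on d and Q
  have hd1 : d ≤ m - 1 := by
    rw [hd]
    calc (S.filter (G.Adj v)).card ≤ (S.erase v).card := by
          apply Finset.card_le_card
          intro u hu
          rw [Finset.mem_filter] at hu
          rw [Finset.mem_erase]
          exact ⟨hu.2.ne', hu.1⟩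
      _ = m - 1 := by rw [Finset.card_erase_of_mem hv, hS]
  have hQ1 : Q ≤ (m - 1) * (m - 2) := by
    rw [hQ]
    calc ∑ u ∈ S.erase v, ((S.erase v).filter (G.Adj u)).card
        ≤ ∑ _u ∈ S.erase v, (m - 2) := by
          apply Finset.sum_le_sum
          intro u hu
          calc ((S.erase v).filter (G.Adj u)).card ≤ ((S.erase v).erase u).card := by
                apply Finset.card_le_card
                intro w hw
                rw [Finset.mem_filter] at hw
                rw [Finset.mem_erase]
                exact ⟨hw.2.ne', hw.1⟩
            _ = m - 2 := by
                rw [Finset.card_erase_of_mem hu, Finset.card_erase_of_mem hv, hS]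
                omega
      _ = (m - 1) * (m - 2) := by
          rw [Finset.sum_const, Finset.card_erase_of_mem hv, hS, smul_eq_mul]
  -- real arithmetic
  have hm0 : (0:ℝ) < (m:ℝ) := by positivity
  have hmr : (3:ℝ) ≤ (m:ℝ) := by exact_mod_cast hm
  have hnr : (m:ℝ) ≤ (n:ℝ) := by exact_mod_cast hmn
  have hd0 : (0:ℝ) ≤ (d:ℝ) := Nat.cast_nonneg _
  have hQ0 : (0:ℝ) ≤ (Q:ℝ) := Nat.cast_nonneg _
  have hdr : (d:ℝ) ≤ (m:ℝ) - 1 := by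
    have h := (Nat.cast_le (α := ℝ)).mpr hd1
    rwa [Nat.cast_sub (by omega), Nat.cast_one] at h
  have hQr : (Q:ℝ) ≤ ((m:ℝ) - 1) * ((m:ℝ) - 2) := by
    have h := (Nat.cast_le (α := ℝ)).mpr hQ1
    rwa [Nat.cast_mul, Nat.cast_sub (by omega), Nat.cast_sub (by omega),
      Nat.cast_one, Nat.cast_two] at h
  have hζ3 := zeta_expand (n:ℝ) (m:ℝ) (d:ℝ) (Q:ℝ) (ζ v) (ne_of_gt hm0) hζ2
  exact zeta_div_bounds (n:ℝ) (m:ℝ) (ζ v) hm0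
    (zeta_arith (n:ℝ) (m:ℝ) (d:ℝ) (Q:ℝ) (ζ v) hmr hnr hd0 hQ0 hdr hQr hζ3)
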